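/- Consensus of CVaR QD-learning (Theorem 2, deterministic vector-recursion form): let G be a connected simple graph on N ≥ 2 vertices with Laplacian matrix L. Let a, b > 0 with a + N·b ≤ 1, let τ1 ∈ (1/2, 1] and τ2 ∈ (0, τ1 − 1/2), and define the weight sequences α_k := a/(k+1)^{τ1} and β_k := b/(k+1)^{τ2} for k ∈ ℕ. Let (w_k)_{k∈ℕ} be a sequence in ℝ^N with ‖w_k‖ ≤ M for all k and some constant M > 0, and let (z_k)_{k∈ℕ} in ℝ^N satisfy z_{k+1} = (I − β_k·L − α_k·I)·z_k + α_k·w_k. Writing ẑ_k := z_k − (1/N)·(1ᵀ z_k)·1, we have: for every τ ∈ (0, τ1 − τ2 − 1/2), (k+1)^τ · ẑ_k → 0 as k → ∞; in particular z_k − (1/N)·(1ᵀ z_k)·1 → 0, i.e., all components of z_k asymptotically reach consensus. -/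

import Mathlib

open Filter Matrix Finset


lemma dot_mulVec_symm {n : ℕ} {A : Matrix (Fin n) (Fin n) ℝ} (hsymm : A.IsSymm)
    (x y : Fin n → ℝ) : y ⬝ᵥ A.mulVec x = x ⬝ᵥ A.mulVec y := by
  rw [Matrix.dotProduct_mulVec, ← Matrix.mulVec_transpose, hsymm, dotProduct_comm]

lemma psd_cauchy_schwarz {n : ℕ} {A : Matrix (Fin n) (Fin n) ℝ} (hsymm : A.IsSymm)
    (hpsd : ∀ v : Fin n → ℝ, 0 ≤ v ⬝ᵥ A.mulVec v) (x y : Fin n → ℝ) :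
    (x ⬝ᵥ A.mulVec y)^2 ≤ (x ⬝ᵥ A.mulVec x) * (y ⬝ᵥ A.mulVec y) := by
  have key : ∀ t : ℝ, 0 ≤ (y ⬝ᵥ A.mulVec y) * (t * t) + (-2 * (x ⬝ᵥ A.mulVec y)) * t
      + (x ⬝ᵥ A.mulVec x) := by
    intro t
    have h := hpsd (x - t • y)
    have hyx := dot_mulVec_symm hsymm x y
    simp only [Matrix.mulVec_sub, Matrix.mulVec_smul, sub_dotProduct, dotProduct_sub,
      smul_dotProduct, dotProduct_smul, smul_eq_mul] at h
    rw [hyx] at h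
    nlinarith [h]
  have h2 := discrim_le_zero key
  rw [discrim] at h2
  nlinarith [h2]


lemma lap_quad_eq {N : ℕ} (G : SimpleGraph (Fin N)) [DecidableRel G.Adj] (x : Fin N → ℝ) :
    x ⬝ᵥ (G.lapMatrix ℝ).mulVec x
      = (∑ i, ∑ j, if G.Adj i j then (x i - x j)^2 else 0) / 2 := by
  rw [← Matrix.toLinearMap₂'_apply', SimpleGraph.lapMatrix_toLinearMap₂']

lemma sum_sq_diff {N : ℕ} (x : Fin N → ℝ) :
    ∑ i : Fin N, ∑ j : Fin N, (x i - x j)^2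
      = 2 * (N * ∑ i, x i ^ 2) - 2 * (∑ i, x i)^2 := by
  have inner : ∀ i, ∑ j : Fin N, (x i - x j)^2
      = N * x i^2 - 2 * x i * (∑ j, x j) + ∑ j, x j^2 := by
    intro i
    calc ∑ j : Fin N, (x i - x j)^2 = ∑ j : Fin N, (x i^2 - 2*x i*x j + x j^2) :=
          Finset.sum_congr rfl fun j _ => by ring
      _ = _ := by
          rw [Finset.sum_add_distrib, Finset.sum_sub_distrib, Finset.sum_const, card_univ,
            Fintype.card_fin, ← Finset.mul_sum, nsmul_eq_mul]
  simp_rw [inner]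
  rw [Finset.sum_add_distrib, Finset.sum_sub_distrib, Finset.sum_const, card_univ,
    Fintype.card_fin, ← Finset.mul_sum, ← Finset.sum_mul, nsmul_eq_mul, ← Finset.mul_sum]
  ring

lemma lap_quad_le {N : ℕ} (G : SimpleGraph (Fin N)) [DecidableRel G.Adj] (x : Fin N → ℝ) :
    x ⬝ᵥ (G.lapMatrix ℝ).mulVec x ≤ N * ∑ i, x i ^ 2 := by
  rw [lap_quad_eq]
  have h1 : (∑ i, ∑ j, if G.Adj i j then (x i - x j)^2 else 0)
      ≤ ∑ i : Fin N, ∑ j : Fin N, (x i - x j)^2 := by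
    refine Finset.sum_le_sum fun i _ => Finset.sum_le_sum fun j _ => ?_
    split
    · exact le_refl _
    · positivity
  have h2 := sum_sq_diff x
  nlinarith [sq_nonneg (∑ i, x i)]

lemma lap_gap {N : ℕ} (hN : 2 ≤ N) (G : SimpleGraph (Fin N)) [DecidableRel G.Adj]
    (hconn : G.Connected) :
    ∃ lam : ℝ, 0 < lam ∧ lam ≤ N ∧ ∀ x : Fin N → ℝ, (∑ i, x i) = 0 →
      lam * (∑ i, x i ^ 2) ≤ x ⬝ᵥ (G.lapMatrix ℝ).mulVec x := by
  classical
  set L := G.lapMatrix ℝ with hL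
  set Q : (Fin N → ℝ) → ℝ := fun x => ∑ i, x i * ∑ j, L i j * x j with hQdef
  have hQeq : ∀ x, Q x = x ⬝ᵥ L.mulVec x := fun x => rfl
  have hQcont : Continuous Q := by
    apply continuous_finset_sum
    intro i _
    exact (continuous_apply i).mul
      (continuous_finset_sum _ fun j _ => continuous_const.mul (continuous_apply j))
  set S : Set (Fin N → ℝ) := {x | (∑ i, x i ^ 2) = 1 ∧ ∑ i, x i = 0} with hSdef
  -- nonempty
  set i0 : Fin N := ⟨0, by omega⟩ with hi0
  set i1 : Fin N := ⟨1, by omega⟩ with hi1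
  have hne : i0 ≠ i1 := by simp [hi0, hi1, Fin.ext_iff]
  set r : ℝ := Real.sqrt 2⁻¹ with hr
  have hr2 : r ^ 2 = 2⁻¹ := Real.sq_sqrt (by norm_num)
  set x₀ : Fin N → ℝ := Pi.single i0 r + Pi.single i1 (-r) with hx₀def
  have hx₀S : x₀ ∈ S := by
    constructor
    · have hsq : ∀ i, x₀ i ^ 2
          = (if i = i0 then r^2 else 0) + (if i = i1 then r^2 else 0) := by
        intro i
        simp only [hx₀def, Pi.add_apply, Pi.single_apply]
        by_cases h0 : i = i0 <;> by_cases h1 : i = i1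
        · exact absurd (h0 ▸ h1) hne
        · simp [h0, h1, hne, Ne.symm hne]
        · simp [h0, h1, hne, Ne.symm hne]
        · simp [h0, h1]
      simp_rw [hsq]
      rw [Finset.sum_add_distrib, Finset.sum_ite_eq' univ i0, Finset.sum_ite_eq' univ i1]
      simp [hr2]; norm_num
    · simp only [hx₀def, Pi.add_apply, Finset.sum_add_distrib, Finset.sum_pi_single']
      simp
  -- compactness
  have hSclosed : IsClosed S := by
    apply IsClosed.inter
    · exact isClosed_eq (by fun_prop) continuous_const
    · exact isClosed_eq (by fun_prop) continuous_const
  have hSbdd : Bornology.IsBounded S := by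
    rw [Metric.isBounded_iff_subset_closedBall 0]
    refine ⟨1, fun x hx => ?_⟩
    rw [Metric.mem_closedBall, dist_zero_right]
    rw [pi_norm_le_iff_of_nonneg zero_le_one]
    intro i
    rw [Real.norm_eq_abs, ← sq_le_one_iff_abs_le_one]
    calc x i ^ 2 ≤ ∑ j, x j ^ 2 :=
          Finset.single_le_sum (fun j _ => sq_nonneg (x j)) (mem_univ i)
      _ = 1 := hx.1
  obtain ⟨xm, hxmS, hmin⟩ :=
    (Metric.isCompact_of_isClosed_isBounded hSclosed hSbdd).exists_isMinOn
      ⟨x₀, hx₀S⟩ hQcont.continuousOn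
  refine ⟨Q xm, ?_, ?_, ?_⟩
  · -- positivity
    have hge : 0 ≤ Q xm := by
      rw [hQeq]
      rw [hL, lap_quad_eq]
      apply div_nonneg _ (by norm_num)
      exact Finset.sum_nonneg fun i _ => Finset.sum_nonneg fun j _ => by split <;> positivity
    rcases hge.lt_or_eq with h | h
    · exact h
    · exfalso
      have hzero : Matrix.toLinearMap₂' ℝ (G.lapMatrix ℝ) xm xm = 0 := by
        rw [Matrix.toLinearMap₂'_apply', ← hQeq, ← h]
      rw [SimpleGraph.lapMatrix_toLinearMap₂'_apply'_eq_zero_iff_forall_reachable] at hzero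
      have hconst : ∀ i j, xm i = xm j := fun i j => hzero i j (hconn i j)
      have : ∀ i, xm i = 0 := by
        intro i
        have hsum : ∑ j, xm j = (N : ℝ) * xm i := by
          rw [Finset.sum_congr rfl fun j _ => hconst j i]
          simp [mul_comm]
        have := hxmS.2
        rw [hsum] at this
        have hNpos : (0:ℝ) < N := by positivity
        exact (mul_eq_zero.mp this).resolve_left (ne_of_gt hNpos)
      have : ∑ i, xm i ^ 2 = 0 := by simp [this]
      rw [hxmS.1] at this; norm_num at this
  · have := lap_quad_le G xm
    rw [← hQeq, hxmS.1] at this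
    simpa using this
  · intro x hxsum
    by_cases hx0 : ∑ i, x i ^ 2 = 0
    · have hx : ∀ i, x i = 0 := by
        intro i
        have := (Finset.sum_eq_zero_iff_of_nonneg (fun j _ => sq_nonneg (x j))).mp hx0 i
          (mem_univ i)
        exact pow_eq_zero_iff (n := 2) (by norm_num) |>.mp this
      have hxz : x = 0 := funext hx
      rw [hx0, hxz, hQeq]
      simp
    · have hqpos : 0 < ∑ i, x i ^ 2 := lt_of_le_of_ne (by positivity) (Ne.symm hx0)
      set c : ℝ := Real.sqrt (∑ i, x i ^ 2) with hc
      have hcpos : 0 < c := Real.sqrt_pos.mpr hqpos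
      have hc2 : c ^ 2 = ∑ i, x i ^ 2 := Real.sq_sqrt hqpos.le
      set y : Fin N → ℝ := c⁻¹ • x with hy
      have hyS : y ∈ S := by
        constructor
        · simp only [hy, Pi.smul_apply, smul_eq_mul, mul_pow, ← Finset.mul_sum]
          rw [← hc2]
          field_simp
        · simp only [hy, Pi.smul_apply, smul_eq_mul, ← Finset.mul_sum, hxsum, mul_zero]
      have hQy : Q y = c⁻¹ * (c⁻¹ * Q x) := by
        rw [hQeq, hQeq, hy, Matrix.mulVec_smul, smul_dotProduct, dotProduct_smul]
        simp [smul_eq_mul]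
      have hle' : Q xm ≤ Q y := hmin hyS
      rw [hQy] at hle'
      rw [← hc2, ← hQeq]
      have hc0 : c ≠ 0 := ne_of_gt hcpos
      have h2 : c^2 * Q xm ≤ c^2 * (c⁻¹ * (c⁻¹ * Q x)) :=
        mul_le_mul_of_nonneg_left hle' (by positivity)
      have h3 : c^2 * (c⁻¹ * (c⁻¹ * Q x)) = Q x := by
        field_simp
      rw [h3] at h2
      linarith

lemma step_bound {N : ℕ} (G : SimpleGraph (Fin N)) [DecidableRel G.Adj] {lam α β : ℝ}
    (hlam0 : 0 ≤ lam) (hlamN : lam ≤ N) (hα : 0 ≤ α) (hβ : 0 ≤ β) (h1 : α + N * β ≤ 1)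
    (hgap : ∀ v : Fin N → ℝ, (∑ i, v i) = 0 →
      lam * (∑ i, v i ^ 2) ≤ v ⬝ᵥ (G.lapMatrix ℝ).mulVec v)
    {Mk : Matrix (Fin N) (Fin N) ℝ}
    (hMk : Mk = (1 : Matrix (Fin N) (Fin N) ℝ) - β • G.lapMatrix ℝ - α • 1)
    (x : Fin N → ℝ) (hx : ∑ i, x i = 0) :
    (∑ i, (Mk.mulVec x) i = 0) ∧
      Real.sqrt (∑ i, (Mk.mulVec x) i ^ 2)
        ≤ (1 - lam * β) * Real.sqrt (∑ i, x i ^ 2) := by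
  classical
  set L := G.lapMatrix ℝ with hL
  have hLsymm : L.IsSymm := G.isSymm_lapMatrix (R := ℝ)
  have hMsymm : Mk.IsSymm := by
    rw [Matrix.IsSymm, hMk, Matrix.transpose_sub, Matrix.transpose_sub, Matrix.transpose_smul,
      Matrix.transpose_smul, Matrix.transpose_one, hLsymm]
  -- quadratic form expansion
  have hexp : ∀ v : Fin N → ℝ, v ⬝ᵥ Mk.mulVec v
      = (∑ i, v i ^ 2) - β * (v ⬝ᵥ L.mulVec v) - α * (∑ i, v i ^ 2) := by
    intro v
    rw [hMk, Matrix.sub_mulVec, Matrix.sub_mulVec, Matrix.smul_mulVec,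
      Matrix.smul_mulVec, Matrix.one_mulVec, dotProduct_sub, dotProduct_sub,
      dotProduct_smul, dotProduct_smul]
    have : v ⬝ᵥ v = ∑ i, v i ^ 2 := by
      simp [dotProduct, pow_two]
    rw [this]
    simp [smul_eq_mul]
  have hNβ : (N : ℝ) * β ≤ 1 - α := by linarith
  have hpsd : ∀ v : Fin N → ℝ, 0 ≤ v ⬝ᵥ Mk.mulVec v := by
    intro v
    rw [hexp]
    have hlap := lap_quad_le G v
    have hq : (0:ℝ) ≤ ∑ i, v i ^ 2 := by positivity
    nlinarith [mul_le_mul_of_nonneg_left hlap hβ]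
  have hub : ∀ v : Fin N → ℝ, (∑ i, v i = 0) →
      v ⬝ᵥ Mk.mulVec v ≤ (1 - lam * β) * (∑ i, v i ^ 2) := by
    intro v hv
    rw [hexp]
    have hgapv := hgap v hv
    have hq : (0:ℝ) ≤ ∑ i, v i ^ 2 := by positivity
    nlinarith [mul_le_mul_of_nonneg_left hgapv hβ]
  -- invariance of sum-zero
  have hrow : ∀ i, ∑ j, L i j = 0 := by
    intro i
    have := congrFun (G.lapMatrix_mulVec_const_eq_zero (R := ℝ)) i
    simpa [Matrix.mulVec, dotProduct] using this
  have hcol : ∀ j, ∑ i, L i j = 0 := by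
    intro j
    have : ∀ i, L i j = L j i := fun i => by
      conv_lhs => rw [← hLsymm]
      rfl
    simp_rw [this]
    exact hrow j
  have hsumy : ∑ i, (Mk.mulVec x) i = 0 := by
    have : ∀ i, (Mk.mulVec x) i = ∑ j, Mk i j * x j := fun i => rfl
    simp_rw [this]
    rw [Finset.sum_comm]
    have hMcol : ∀ j, ∑ i, Mk i j = 1 - α := by
      intro j
      rw [hMk]
      simp only [Matrix.sub_apply, Matrix.smul_apply, Matrix.one_apply, smul_eq_mul,
        Finset.sum_sub_distrib, mul_ite, mul_one, mul_zero, Finset.sum_ite_eq',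
        mem_univ, if_true, ← Finset.mul_sum, hcol, mul_zero]
      ring
    simp_rw [← Finset.sum_mul, hMcol]
    rw [← Finset.mul_sum, hx, mul_zero]
  refine ⟨hsumy, ?_⟩
  set y : Fin N → ℝ := Mk.mulVec x with hy
  have hr0 : 0 ≤ 1 - lam * β := by nlinarith
  have hqx : (0:ℝ) ≤ ∑ i, x i ^ 2 := by positivity
  have hqy : (0:ℝ) ≤ ∑ i, y i ^ 2 := by positivity
  have hdot : ∀ v : Fin N → ℝ, v ⬝ᵥ v = ∑ i, v i ^ 2 := fun v => by
    simp [dotProduct, pow_two]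
  have hkey : (∑ i, y i ^ 2) ≤ (1 - lam * β)^2 * (∑ i, x i ^ 2) := by
    have h1' : ∑ i, y i ^ 2 = x ⬝ᵥ Mk.mulVec y := by
      rw [← hdot y, hy]
      exact dot_mulVec_symm hMsymm x (Mk.mulVec x)
    have hcs := psd_cauchy_schwarz hMsymm hpsd x y
    have hx' := hub x hx
    have hy' := hub y hsumy
    by_cases h0 : (∑ i, y i ^ 2) = 0
    · rw [h0]; positivity
    · have hpos : 0 < ∑ i, y i ^ 2 := lt_of_le_of_ne hqy (Ne.symm h0)
      have h2 : (∑ i, y i ^ 2)^2 ≤ ((1 - lam * β) * (∑ i, x i ^ 2))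
          * ((1 - lam * β) * (∑ i, y i ^ 2)) := by
        calc (∑ i, y i ^ 2)^2 = (x ⬝ᵥ Mk.mulVec y)^2 := by rw [h1']
          _ ≤ (x ⬝ᵥ Mk.mulVec x) * (y ⬝ᵥ Mk.mulVec y) := hcs
          _ ≤ _ := by
              apply mul_le_mul hx' hy' (hpsd y)
              positivity
      nlinarith [h2, hpos]
  calc Real.sqrt (∑ i, y i ^ 2) ≤ Real.sqrt ((1 - lam * β)^2 * (∑ i, x i ^ 2)) :=
        Real.sqrt_le_sqrt hkey
    _ = (1 - lam * β) * Real.sqrt (∑ i, x i ^ 2) := by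
        rw [Real.sqrt_mul (sq_nonneg _), Real.sqrt_sq hr0]


lemma robbins (u γ δ : ℕ → ℝ) (hu : ∀ k, 0 ≤ u k)
    (hγ0 : ∀ k, 0 ≤ γ k) (hγ1 : ∀ k, γ k ≤ 1)
    (hdiv : Filter.Tendsto (fun n => ∑ k ∈ Finset.range n, γ k) Filter.atTop Filter.atTop)
    (hδ : Filter.Tendsto δ Filter.atTop (nhds 0))
    (hrec : ∀ᶠ k in Filter.atTop, u (k+1) ≤ (1 - γ k) * u k + γ k * δ k) :
    Filter.Tendsto u Filter.atTop (nhds 0) := by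
  rw [Metric.tendsto_atTop]
  intro ε hε
  have hδ' : ∀ᶠ k in Filter.atTop, δ k ≤ ε/2 := by
    have := Metric.tendsto_atTop.mp hδ (ε/2) (by linarith)
    obtain ⟨K, hK⟩ := this
    exact eventually_atTop.mpr ⟨K, fun k hk => by
      have := hK k hk
      rw [Real.dist_eq, sub_zero] at this
      exact (abs_lt.mp this).2.le⟩
  obtain ⟨K, hK⟩ := eventually_atTop.mp (hrec.and hδ')
  set P : ℕ → ℝ := fun n => ∏ k ∈ Finset.Ico K n, (1 - γ k) with hP
  have hP0 : ∀ n, 0 ≤ P n := fun n =>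
    Finset.prod_nonneg fun k _ => by linarith [hγ1 k]
  have hbound : ∀ n, K ≤ n → u n ≤ ε/2 + P n * u K := by
    intro n hn
    induction n, hn using Nat.le_induction with
    | base =>
        simp only [hP, Finset.Ico_self, Finset.prod_empty, one_mul]
        linarith [hu K]
    | succ n hn ih =>
        have hPn1 : P (n+1) = P n * (1 - γ n) := by
          rw [hP]
          exact Finset.prod_Ico_succ_top hn _
        have hr := (hK n hn).1
        have hd := (hK n hn).2
        have h1γ : 0 ≤ 1 - γ n := by linarith [hγ1 n]
        calc u (n+1) ≤ (1 - γ n) * u n + γ n * δ n := hr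
          _ ≤ (1 - γ n) * (ε/2 + P n * u K) + γ n * (ε/2) := by
              have := mul_le_mul_of_nonneg_left ih h1γ
              have := mul_le_mul_of_nonneg_left hd (hγ0 n)
              nlinarith
          _ = ε/2 + P (n+1) * u K := by rw [hPn1]; ring
  have hPle : ∀ n, K ≤ n → P n ≤ Real.exp (-(∑ k ∈ Finset.Ico K n, γ k)) := by
    intro n hn
    calc P n ≤ ∏ k ∈ Finset.Ico K n, Real.exp (-(γ k)) := by
          apply Finset.prod_le_prod (fun k _ => by linarith [hγ1 k])
          intro k _
          have := Real.add_one_le_exp (-(γ k))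
          linarith
      _ = Real.exp (-(∑ k ∈ Finset.Ico K n, γ k)) := by
          rw [← Real.exp_sum, Finset.sum_neg_distrib]
  -- the tail product tends to zero
  have hStend : Filter.Tendsto (fun n => ∑ k ∈ Finset.Ico K n, γ k) Filter.atTop Filter.atTop := by
    apply Filter.Tendsto.congr' (f₁ := fun n => (∑ k ∈ Finset.range n, γ k) - ∑ k ∈ Finset.range K, γ k)
    · filter_upwards [eventually_ge_atTop K] with n hn
      rw [Finset.sum_Ico_eq_sub _ hn]
    · exact (Filter.tendsto_atTop_add_const_right Filter.atTop (-(∑ k ∈ Finset.range K, γ k)) hdiv).congr (fun n => by ring)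
  have hexp : Filter.Tendsto (fun n => Real.exp (-(∑ k ∈ Finset.Ico K n, γ k)) * u K)
      Filter.atTop (nhds 0) := by
    have h1 : Filter.Tendsto (fun n => Real.exp (-(∑ k ∈ Finset.Ico K n, γ k)))
        Filter.atTop (nhds 0) :=
      Real.tendsto_exp_neg_atTop_nhds_zero.comp hStend
    simpa using h1.mul_const (u K)
  have hev : ∀ᶠ n in Filter.atTop, Real.exp (-(∑ k ∈ Finset.Ico K n, γ k)) * u K < ε/2 := by
    have := Metric.tendsto_atTop.mp hexp (ε/2) (by linarith)
    obtain ⟨K', hK'⟩ := this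
    exact eventually_atTop.mpr ⟨K', fun n hn => by
      have := hK' n hn
      rw [Real.dist_eq, sub_zero] at this
      exact (abs_lt.mp this).2⟩
  obtain ⟨K'', hK''⟩ := eventually_atTop.mp (hev.and (eventually_ge_atTop K))
  refine ⟨K'', fun n hn => ?_⟩
  obtain ⟨h1, h2⟩ := hK'' n hn
  rw [Real.dist_eq, sub_zero, abs_of_nonneg (hu n)]
  have hPn : P n * u K ≤ Real.exp (-(∑ k ∈ Finset.Ico K n, γ k)) * u K :=
    mul_le_mul_of_nonneg_right (hPle n h2) (hu K)
  have := hbound n h2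
  linarith

-- ℓ² triangle inequality for sums of squares
lemma l2_triangle {n : ℕ} (x y : Fin n → ℝ) :
    Real.sqrt (∑ i, (x i + y i)^2)
      ≤ Real.sqrt (∑ i, x i ^ 2) + Real.sqrt (∑ i, y i ^ 2) := by
  have hcs : (∑ i, x i * y i)^2 ≤ (∑ i, x i ^ 2) * (∑ i, y i ^ 2) := by
    have h1 := psd_cauchy_schwarz (A := (1 : Matrix (Fin n) (Fin n) ℝ))
      (Matrix.transpose_one) (fun v => by
        rw [Matrix.one_mulVec]
        have : v ⬝ᵥ v = ∑ i, v i ^ 2 := by simp [dotProduct, pow_two]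
        rw [this]; positivity) x y
    simpa [Matrix.one_mulVec, dotProduct, pow_two] using h1
  have hX : (0:ℝ) ≤ ∑ i, x i ^ 2 := by positivity
  have hY : (0:ℝ) ≤ ∑ i, y i ^ 2 := by positivity
  have hD : ∑ i, x i * y i ≤ Real.sqrt (∑ i, x i ^ 2) * Real.sqrt (∑ i, y i ^ 2) := by
    have h2 : Real.sqrt ((∑ i, x i * y i)^2) ≤ Real.sqrt ((∑ i, x i ^ 2) * (∑ i, y i ^ 2)) :=
      Real.sqrt_le_sqrt hcs
    rw [Real.sqrt_sq_eq_abs, Real.sqrt_mul hX] at h2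
    exact (le_abs_self _).trans h2
  have hexp : ∑ i, (x i + y i)^2 = (∑ i, x i ^2) + 2 * (∑ i, x i * y i) + ∑ i, y i ^2 := by
    have h : ∀ i, (x i + y i)^2 = x i^2 + 2*(x i*y i) + y i^2 := fun i => by ring
    simp_rw [h, Finset.sum_add_distrib, Finset.mul_sum]
  have hle : ∑ i, (x i + y i)^2
      ≤ (Real.sqrt (∑ i, x i ^ 2) + Real.sqrt (∑ i, y i ^ 2))^2 := by
    rw [hexp, add_sq, Real.sq_sqrt hX, Real.sq_sqrt hY]
    linarith
  calc Real.sqrt (∑ i, (x i + y i)^2)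
      ≤ Real.sqrt ((Real.sqrt (∑ i, x i ^ 2) + Real.sqrt (∑ i, y i ^ 2))^2) :=
        Real.sqrt_le_sqrt hle
    _ = _ := by
        rw [Real.sqrt_sq (by positivity)]

lemma l2_smul {n : ℕ} (c : ℝ) (hc : 0 ≤ c) (x : Fin n → ℝ) :
    Real.sqrt (∑ i, (c * x i)^2) = c * Real.sqrt (∑ i, x i ^ 2) := by
  simp_rw [mul_pow, ← Finset.mul_sum]
  rw [Real.sqrt_mul (by positivity), Real.sqrt_sq hc]

lemma l2_center {n : ℕ} (hn : 0 < n) (w : Fin n → ℝ) :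
    Real.sqrt (∑ i, (w i - (∑ j, w j) / n)^2) ≤ Real.sqrt (∑ i, w i ^ 2) := by
  apply Real.sqrt_le_sqrt
  set m : ℝ := (∑ j, w j) / n with hm
  have hexp : ∑ i, (w i - m)^2 = (∑ i, w i ^2) - 2 * m * (∑ i, w i) + n * m^2 := by
    have h : ∀ i, (w i - m)^2 = w i^2 - 2*m*w i + m^2 := fun i => by ring
    simp_rw [h, Finset.sum_add_distrib, Finset.sum_sub_distrib, Finset.sum_const, card_univ,
      Fintype.card_fin, nsmul_eq_mul, Finset.mul_sum]
  have hnm : (n:ℝ) * m = ∑ j, w j := by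
    rw [hm]; field_simp
  rw [hexp, ← hnm]
  have hn0 : (0:ℝ) ≤ n := Nat.cast_nonneg n
  nlinarith [mul_nonneg hn0 (sq_nonneg m)]


noncomputable section

set_option maxHeartbeats 1000000 in
/-- Consensus of CVaR QD-learning (Theorem 2, deterministic vector-recursion
form): components of the iterates asymptotically reach consensus, with rate
`(k+1)^τ` for every `τ ∈ (0, τ1 - τ2 - 1/2)`. -/
theorem cvar_qd_consensus (N : ℕ) (hN : 2 ≤ N)
    (G : SimpleGraph (Fin N)) [DecidableRel G.Adj] (hconn : G.Connected)
    (a b : ℝ) (ha : 0 < a) (hb : 0 < b) (hab : a + N * b ≤ 1)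
    (τ1 τ2 : ℝ) (hτ1 : τ1 ∈ Set.Ioc (1/2 : ℝ) 1) (hτ2 : τ2 ∈ Set.Ioo (0:ℝ) (τ1 - 1/2))
    (M : ℝ) (hM : 0 < M)
    (w : ℕ → Fin N → ℝ)
    (hw : ∀ k, Real.sqrt (∑ i, w k i ^ 2) ≤ M)
    (z : ℕ → Fin N → ℝ)
    (hz : ∀ k : ℕ, z (k + 1) =
      ((1 : Matrix (Fin N) (Fin N) ℝ)
          - (b / ((k : ℝ) + 1) ^ τ2) • G.lapMatrix ℝ
          - (a / ((k : ℝ) + 1) ^ τ1) • (1 : Matrix (Fin N) (Fin N) ℝ)).mulVec (z k)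
        + (a / ((k : ℝ) + 1) ^ τ1) • w k) :
    (∀ τ ∈ Set.Ioo (0:ℝ) (τ1 - τ2 - 1/2),
      Filter.Tendsto
        (fun k : ℕ => ((k : ℝ) + 1) ^ τ • (fun i => z k i - (∑ j, z k j) / N))
        Filter.atTop (nhds 0)) ∧
    Filter.Tendsto (fun k : ℕ => (fun i => z k i - (∑ j, z k j) / N))
      Filter.atTop (nhds 0) := by
  classical
  obtain ⟨hτ1a, hτ1b⟩ := hτ1
  obtain ⟨hτ2a, hτ2b⟩ := hτ2
  obtain ⟨lam, hlam_pos, hlamN, hgap⟩ := lap_gap hN G hconn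
  have hN0 : (0:ℝ) < N := by
    have : (2:ℝ) ≤ N := by exact_mod_cast hN
    linarith
  set L := G.lapMatrix ℝ with hLdef
  set α : ℕ → ℝ := fun k => a / ((k:ℝ)+1) ^ τ1 with hαdef
  set β : ℕ → ℝ := fun k => b / ((k:ℝ)+1) ^ τ2 with hβdef
  have hkpos : ∀ k : ℕ, (0:ℝ) < (k:ℝ)+1 := fun k => by positivity
  have hk1 : ∀ k : ℕ, (1:ℝ) ≤ (k:ℝ) + 1 := fun k => by
    have : (0:ℝ) ≤ (k:ℝ) := Nat.cast_nonneg k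
    linarith
  have hrpow_pos : ∀ (k : ℕ) (t : ℝ), 0 < ((k:ℝ)+1) ^ t :=
    fun k t => Real.rpow_pos_of_pos (hkpos k) t
  have hrpow_ge1 : ∀ (k : ℕ) (t : ℝ), 0 ≤ t → 1 ≤ ((k:ℝ)+1) ^ t :=
    fun k t ht => Real.one_le_rpow (hk1 k) ht
  have hα_pos : ∀ k, 0 < α k := fun k => div_pos ha (hrpow_pos k τ1)
  have hβ_pos : ∀ k, 0 < β k := fun k => div_pos hb (hrpow_pos k τ2)
  have hα_le : ∀ k, α k ≤ a := fun k =>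
    div_le_self ha.le (hrpow_ge1 k τ1 (by linarith))
  have hβ_le : ∀ k, β k ≤ b := fun k =>
    div_le_self hb.le (hrpow_ge1 k τ2 (by linarith))
  have hsum1 : ∀ k, α k + (N:ℝ) * β k ≤ 1 := fun k => by
    have h1 := mul_le_mul_of_nonneg_left (hβ_le k) hN0.le
    linarith [hα_le k]
  set Mk : ℕ → Matrix (Fin N) (Fin N) ℝ :=
    fun k => (1 : Matrix (Fin N) (Fin N) ℝ) - β k • L - α k • 1 with hMkdef
  have hzM : ∀ k, z (k+1) = (Mk k).mulVec (z k) + α k • w k := fun k => hz k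
  set S : ℕ → ℝ := fun k => ∑ j, z k j with hSdef
  set F : ℕ → Fin N → ℝ := fun k i => z k i - S k / N with hFdef
  set u : ℕ → ℝ := fun k => Real.sqrt (∑ i, F k i ^ 2) with hudef
  have hFsum : ∀ k, ∑ i, F k i = 0 := by
    intro k
    simp only [hFdef]
    rw [Finset.sum_sub_distrib, Finset.sum_const, card_univ, Fintype.card_fin, nsmul_eq_mul]
    have hSk : (∑ i, z k i) = S k := rfl
    rw [hSk]
    field_simp
    ring
  have hu0 : ∀ k, 0 ≤ u k := fun k => Real.sqrt_nonneg _
  -- coordinatewise bound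
  have hcoord : ∀ k i, |F k i| ≤ u k := by
    intro k i
    rw [hudef, ← Real.sqrt_sq_eq_abs]
    exact Real.sqrt_le_sqrt (Finset.single_le_sum (fun j _ => sq_nonneg (F k j)) (mem_univ i))
  have hFrec : ∀ k, F (k+1)
      = fun i => ((Mk k).mulVec (F k)) i + α k * (w k i - (∑ j, w k j) / N) := by
    intro k
    have hsb0 : ∑ i, ((Mk k).mulVec (F k)) i = 0 :=
      (step_bound G hlam_pos.le hlamN (hα_pos k).le (hβ_pos k).le (hsum1 k) hgap rfl
        (F k) (hFsum k)).1
    have hLone : L.mulVec (fun _ => (1:ℝ)) = 0 := G.lapMatrix_mulVec_const_eq_zero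
    have hMone : (Mk k).mulVec (fun _ => (1:ℝ)) = fun _ => (1 - α k) := by
      show ((1 : Matrix (Fin N) (Fin N) ℝ) - β k • L - α k • 1).mulVec _ = _
      rw [Matrix.sub_mulVec, Matrix.sub_mulVec, Matrix.smul_mulVec,
        Matrix.smul_mulVec, Matrix.one_mulVec, hLone]
      funext i
      simp
    have hzdec : z k = (fun i => F k i) + (S k / N) • (fun _ => (1:ℝ)) := by
      funext i
      simp only [Pi.add_apply, Pi.smul_apply, smul_eq_mul, mul_one, hFdef]
      ring
    have hz1 : z (k+1)
        = (fun i => ((Mk k).mulVec (F k)) i + (S k / N) * (1 - α k) + α k * w k i) := by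
      rw [hzM k, hzdec, Matrix.mulVec_add, Matrix.mulVec_smul, hMone]
      funext i
      simp only [Pi.add_apply, Pi.smul_apply, smul_eq_mul]
    have hS1 : S (k+1) = S k / N * (1 - α k) * N + α k * (∑ j, w k j) := by
      have hS1' : S (k+1) = ∑ i, z (k+1) i := rfl
      rw [hS1', hz1]
      rw [Finset.sum_add_distrib, Finset.sum_add_distrib, hsb0, Finset.sum_const, card_univ,
        Fintype.card_fin, nsmul_eq_mul, ← Finset.mul_sum]
      ring
    funext i
    have hF1 : F (k+1) i = z (k+1) i - S (k+1)/N := rfl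
    rw [hF1, hz1, hS1]
    field_simp
    ring
  have hstep : ∀ k, u (k+1) ≤ (1 - lam * β k) * u k + α k * M := by
    intro k
    have hsb := step_bound G hlam_pos.le hlamN (hα_pos k).le (hβ_pos k).le (hsum1 k) hgap
      rfl (F k) (hFsum k)
    have h1 : u (k+1) = Real.sqrt
        (∑ i, (((Mk k).mulVec (F k)) i + α k * (w k i - (∑ j, w k j)/N))^2) := by
      have h1' : u (k+1) = Real.sqrt (∑ i, F (k+1) i ^2) := rfl
      simp only [hFrec] at h1'
      exact h1'
    have h3 : Real.sqrt (∑ i, (α k * (w k i - (∑ j, w k j)/N))^2) ≤ α k * M := by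
      rw [l2_smul (α k) (hα_pos k).le]
      have h4 := l2_center (show 0 < N by omega) (w k)
      exact mul_le_mul_of_nonneg_left (h4.trans (hw k)) (hα_pos k).le
    have h6 : u (k+1) ≤ Real.sqrt (∑ i, (((Mk k).mulVec (F k)) i)^2)
        + Real.sqrt (∑ i, (α k * (w k i - (∑ j, w k j)/N))^2) := by
      rw [h1]; exact l2_triangle _ _
    have huk : u k = Real.sqrt (∑ i, F k i ^ 2) := rfl
    have hsb2 := hsb.2
    rw [← huk] at hsb2
    linarith [hsb2, h3, h6]
  have hbase : Filter.Tendsto (fun k : ℕ => ((k:ℝ)+1)) Filter.atTop Filter.atTop :=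
    Filter.tendsto_atTop_add_const_right _ 1 tendsto_natCast_atTop_atTop
  have hkey : ∀ τ : ℝ, 0 ≤ τ → τ ≤ 1 → τ + τ2 < τ1 →
      Filter.Tendsto (fun k : ℕ => ((k:ℝ)+1)^τ * u k) Filter.atTop (nhds 0) := by
    intro τ hτ0 hτle1 hττ
    set γ : ℕ → ℝ := fun k => lam/2 * β k with hγdef
    set δ : ℕ → ℝ := fun k => (2*M*a/(lam*b)) * ((k:ℝ)+2)^τ * ((k:ℝ)+1)^(τ2-τ1) with hδdef
    have hγ0 : ∀ k, 0 ≤ γ k := fun k => by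
      have := (hβ_pos k).le
      have := hlam_pos.le
      positivity
    have hγ1 : ∀ k, γ k ≤ 1 := by
      intro k
      have h1 := hβ_le k
      have h2 := (hβ_pos k).le
      have hγk : γ k = lam/2 * β k := rfl
      rw [hγk]
      nlinarith [hlam_pos.le, hlamN, hb.le, hN0, ha]
    have hdiv : Filter.Tendsto (fun n => ∑ k ∈ Finset.range n, γ k)
        Filter.atTop Filter.atTop := by
      have hlow : ∀ k : ℕ, lam*b/2 * (1/((k:ℝ)+1)) ≤ γ k := by
        intro k
        have hp : ((k:ℝ)+1)^τ2 ≤ ((k:ℝ)+1) := by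
          have h := Real.rpow_le_rpow_of_exponent_le (hk1 k)
            (show τ2 ≤ 1 by linarith)
          rwa [Real.rpow_one] at h
        have hq : b/((k:ℝ)+1) ≤ β k := by
          have hβk : β k = b / ((k:ℝ)+1)^τ2 := rfl
          rw [hβk]
          gcongr
        have hγk : γ k = lam/2 * β k := rfl
        rw [hγk]
        calc lam*b/2 * (1/((k:ℝ)+1)) = lam/2 * (b/((k:ℝ)+1)) := by ring
          _ ≤ lam/2 * β k := by
              apply mul_le_mul_of_nonneg_left hq (by positivity)
      apply Filter.tendsto_atTop_mono (fun n => Finset.sum_le_sum fun k _ => hlow k)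
      have hc : (0:ℝ) < lam*b/2 := by positivity
      have h := (Real.tendsto_sum_range_one_div_nat_succ_atTop).const_mul_atTop hc
      exact h.congr (fun n => by rw [Finset.mul_sum])
    have hδ0 : Filter.Tendsto δ Filter.atTop (nhds 0) := by
      set s : ℝ := τ1 - τ2 - τ with hsdef
      have hspos : 0 < s := by rw [hsdef]; linarith
      set C : ℝ := (2*M*a/(lam*b)) * 2^τ with hCdef
      have hC0 : 0 ≤ C := by positivity
      have hub : ∀ k : ℕ, δ k ≤ C * ((k:ℝ)+1)^(-s) := by
        intro k
        have h2 : ((k:ℝ)+2)^τ ≤ 2^τ * ((k:ℝ)+1)^τ := by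
          rw [← Real.mul_rpow (by norm_num) (by positivity)]
          apply Real.rpow_le_rpow (by positivity) (by linarith [hkpos k]) hτ0
        have h3 : ((k:ℝ)+1)^τ * ((k:ℝ)+1)^(τ2-τ1) = ((k:ℝ)+1)^(-s) := by
          rw [← Real.rpow_add (hkpos k), hsdef]
          ring_nf
        have hδk : δ k = (2*M*a/(lam*b)) * ((k:ℝ)+2)^τ * ((k:ℝ)+1)^(τ2-τ1) := rfl
        rw [hδk, hCdef, ← h3]
        have h4 : (0:ℝ) ≤ 2*M*a/(lam*b) := by positivity
        have h5 := mul_le_mul_of_nonneg_right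
          (mul_le_mul_of_nonneg_left h2 h4) (Real.rpow_nonneg (hkpos k).le (τ2-τ1))
        calc 2*M*a/(lam*b) * ((k:ℝ)+2)^τ * ((k:ℝ)+1)^(τ2-τ1)
            ≤ 2*M*a/(lam*b) * (2^τ * ((k:ℝ)+1)^τ) * ((k:ℝ)+1)^(τ2-τ1) := h5
          _ = 2*M*a/(lam*b) * 2^τ * (((k:ℝ)+1)^τ * ((k:ℝ)+1)^(τ2-τ1)) := by ring
      have hδnn : ∀ k, 0 ≤ δ k := by
        intro k
        have hδk : δ k = (2*M*a/(lam*b)) * ((k:ℝ)+2)^τ * ((k:ℝ)+1)^(τ2-τ1) := rfl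
        rw [hδk]
        have h1 : (0:ℝ) < (k:ℝ)+2 := by positivity
        positivity
      apply squeeze_zero hδnn hub
      have h6 := (tendsto_rpow_neg_atTop hspos).comp hbase
      have h7 := h6.const_mul C
      simpa using h7
    have hev : ∀ᶠ k : ℕ in Filter.atTop, 2*τ/(lam*b) ≤ ((k:ℝ)+1)^(1-τ2) := by
      have h8 : Filter.Tendsto (fun k : ℕ => ((k:ℝ)+1)^(1-τ2)) Filter.atTop Filter.atTop :=
        (tendsto_rpow_atTop (by linarith : (0:ℝ) < 1-τ2)).comp hbase
      exact h8.eventually_ge_atTop _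
    have hrecv : ∀ᶠ k : ℕ in Filter.atTop,
        (((k+1 : ℕ):ℝ)+1)^τ * u (k+1) ≤ (1 - γ k) * (((k:ℝ)+1)^τ * u k) + γ k * δ k := by
      filter_upwards [hev] with k hk
      have hcast : (((k+1 : ℕ):ℝ)+1) = (k:ℝ)+2 := by push_cast; ring
      rw [hcast]
      have hτγ : τ * (1/((k:ℝ)+1)) ≤ γ k := by
        have hγk : γ k = lam/2 * (b/((k:ℝ)+1)^τ2) := rfl
        have hX := hrpow_pos k τ2
        have hsplit : ((k:ℝ)+1)^(1-τ2) * ((k:ℝ)+1)^τ2 = (k:ℝ)+1 := by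
          rw [← Real.rpow_add (hkpos k), sub_add_cancel, Real.rpow_one]
        have hlb0 : (0:ℝ) < lam * b := by positivity
        have h3 : 2*τ ≤ lam*b*((k:ℝ)+1)^(1-τ2) := by
          have h4 := mul_le_mul_of_nonneg_left hk hlb0.le
          calc 2*τ = lam*b*(2*τ/(lam*b)) := by field_simp
            _ ≤ _ := h4
        have hR : lam/2 * (b/((k:ℝ)+1)^τ2) = (lam*b/2)/((k:ℝ)+1)^τ2 := by ring
        rw [hγk, hR, mul_one_div, div_le_div_iff₀ (hkpos k) hX]
        nlinarith [mul_le_mul_of_nonneg_right h3 hX.le, hsplit]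
      have hBern : ((k:ℝ)+2)^τ ≤ ((k:ℝ)+1)^τ * (1 + τ * (1/((k:ℝ)+1))) := by
        have hfac : (k:ℝ)+2 = ((k:ℝ)+1) * (1 + 1/((k:ℝ)+1)) := by
          field_simp
          ring
        rw [hfac, Real.mul_rpow (hkpos k).le (by positivity)]
        apply mul_le_mul_of_nonneg_left _ (Real.rpow_nonneg (hkpos k).le τ)
        have hh0 : (0:ℝ) ≤ 1/((k:ℝ)+1) := by positivity
        exact rpow_one_add_le_one_add_mul_self (by linarith) hτ0 hτle1
      have hu1 := hstep k
      have hr0 : 0 ≤ 1 - lam * β k := by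
        have h9 : lam * β k ≤ (N:ℝ) * b :=
          mul_le_mul hlamN (hβ_le k) (hβ_pos k).le hN0.le
        linarith [h9, hab, ha]
      have hγδ : γ k * δ k = ((k:ℝ)+2)^τ * (α k * M) := by
        have hγk : γ k = lam/2 * (b/((k:ℝ)+1)^τ2) := rfl
        have hδk : δ k = (2*M*a/(lam*b)) * ((k:ℝ)+2)^τ * ((k:ℝ)+1)^(τ2-τ1) := rfl
        have hαk : α k = a / ((k:ℝ)+1)^τ1 := rfl
        have hmul : ((k:ℝ)+1)^(τ2-τ1) = ((k:ℝ)+1)^τ2 / ((k:ℝ)+1)^τ1 :=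
          Real.rpow_sub (hkpos k) τ2 τ1
        rw [hγk, hδk, hαk, hmul]
        have h10 := hrpow_pos k τ2
        have h11 := hrpow_pos k τ1
        field_simp
      calc ((k:ℝ)+2)^τ * u (k+1)
          ≤ ((k:ℝ)+2)^τ * ((1 - lam*β k) * u k + α k * M) :=
            mul_le_mul_of_nonneg_left hu1 (Real.rpow_nonneg (by positivity) τ)
        _ = ((k:ℝ)+2)^τ * (1 - lam*β k) * u k + ((k:ℝ)+2)^τ * (α k * M) := by ring
        _ ≤ (1 - γ k) * (((k:ℝ)+1)^τ * u k) + γ k * δ k := by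
            rw [hγδ]
            refine add_le_add ?_ le_rfl
            have h7 : (1 + τ*(1/((k:ℝ)+1))) * (1-lam*β k) ≤ 1 - γ k := by
              have hτh0 : 0 ≤ τ * (1/((k:ℝ)+1)) := by positivity
              have hγk : γ k = lam/2 * β k := rfl
              rw [hγk] at hτγ ⊢
              nlinarith [hτγ, hτh0, hr0, mul_nonneg hτh0
                (mul_nonneg hlam_pos.le (hβ_pos k).le)]
            have hfact : ((k:ℝ)+2)^τ * (1 - lam*β k) ≤ (1 - γ k) * ((k:ℝ)+1)^τ := by
              calc ((k:ℝ)+2)^τ * (1 - lam*β k)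
                  ≤ (((k:ℝ)+1)^τ * (1 + τ * (1/((k:ℝ)+1)))) * (1-lam*β k) :=
                    mul_le_mul_of_nonneg_right hBern hr0
                _ = ((k:ℝ)+1)^τ * ((1 + τ * (1/((k:ℝ)+1))) * (1-lam*β k)) := by ring
                _ ≤ ((k:ℝ)+1)^τ * (1 - γ k) :=
                    mul_le_mul_of_nonneg_left h7 (Real.rpow_nonneg (hkpos k).le τ)
                _ = (1 - γ k) * ((k:ℝ)+1)^τ := by ring
            calc ((k:ℝ)+2)^τ * (1-lam*β k) * u k
                ≤ ((1-γ k) * ((k:ℝ)+1)^τ) * u k :=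
                  mul_le_mul_of_nonneg_right hfact (hu0 k)
              _ = (1-γ k) * (((k:ℝ)+1)^τ * u k) := by ring
    exact robbins (fun k => ((k:ℝ)+1)^τ * u k) γ δ
      (fun k => mul_nonneg (Real.rpow_nonneg (hkpos k).le τ) (hu0 k))
      hγ0 hγ1 hdiv hδ0 hrecv
  constructor
  · intro τ hτ
    obtain ⟨hτpos, hτlt⟩ := hτ
    have h1 : τ ≤ (1:ℝ) := by linarith
    have h2 : τ + τ2 < τ1 := by linarith
    have hv := hkey τ hτpos.le h1 h2
    rw [tendsto_pi_nhds]
    intro i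
    simp only [Pi.zero_apply]
    apply squeeze_zero_norm _ hv
    intro k
    simp only [Pi.smul_apply, smul_eq_mul, Real.norm_eq_abs, abs_mul]
    rw [abs_of_nonneg (Real.rpow_nonneg (hkpos k).le τ)]
    apply mul_le_mul_of_nonneg_left _ (Real.rpow_nonneg (hkpos k).le τ)
    have hFeq : z k i - (∑ j, z k j)/N = F k i := rfl
    rw [hFeq]
    exact hcoord k i
  · set τ0 : ℝ := (τ1 - τ2 - 1/2)/2 with hτ0def
    have hτ0pos : 0 < τ0 := by rw [hτ0def]; linarith
    have hv := hkey τ0 hτ0pos.le (by rw [hτ0def]; linarith) (by rw [hτ0def]; linarith)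
    rw [tendsto_pi_nhds]
    intro i
    simp only [Pi.zero_apply]
    apply squeeze_zero_norm _ hv
    intro k
    have hFeq : z k i - (∑ j, z k j)/N = F k i := rfl
    show ‖z k i - (∑ j, z k j)/(N:ℝ)‖ ≤ ((k:ℝ)+1)^τ0 * u k
    rw [Real.norm_eq_abs, hFeq]
    calc |F k i| ≤ u k := hcoord k i
      _ ≤ ((k:ℝ)+1)^τ0 * u k :=
          le_mul_of_one_le_left (hu0 k) (hrpow_ge1 k τ0 hτ0pos.le)
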